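/- Let r(x) = 1 + a₁x + a₂x² + a₃x³ + ⋯ be a formal power series over ℤ with a₁ = 1 or a₁ = -1. Then there do not exist such coefficients satisfying the congruence r(t+z)·r(t) ≡ P(t,z)·r(z) in the ring ℤ[[t,z]]/(2z, z³), where P(t,z) = 1 + a₁²·t(t+z) + a₂²·t²(t+z)² + a₃²·t³(t+z)³ + ⋯ . -/

import Mathlib

open MvPowerSeries Finsupp

noncomputable section

/-- The monomial exponent of `t^j * z^k`, where `t = X 0` and `z = X 1`. -/
def ex (j k : ℕ) : Fin 2 →₀ ℕ := Finsupp.single 0 j + Finsupp.single 1 k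

/-- The series `r(t+z) = ∑ i, a i * (t+z)^i ∈ ℤ[[t,z]]`, expanded by the binomial
theorem: the coefficient of `t^j z^k` is `C(j+k, k) * a (j+k)`. -/
def rtz (a : ℕ → ℤ) : MvPowerSeries (Fin 2) ℤ :=
  fun e => ((e 0 + e 1).choose (e 1) : ℤ) * a (e 0 + e 1)

/-- The series `r(t) = ∑ i, a i * t^i`, viewed in `ℤ[[t,z]]`. -/
def rt (a : ℕ → ℤ) : MvPowerSeries (Fin 2) ℤ :=
  fun e => if e 1 = 0 then a (e 0) else 0

/-- The series `r(z) = ∑ i, a i * z^i`, viewed in `ℤ[[t,z]]`. -/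
def rz (a : ℕ → ℤ) : MvPowerSeries (Fin 2) ℤ :=
  fun e => if e 0 = 0 then a (e 1) else 0

/-- The series `P(t,z) = ∑ i, (a i)^2 * t^i * (t+z)^i ∈ ℤ[[t,z]]` (for `a 0 = 1` this is
`1 + ∑_{i ≥ 1} (a i)^2 t^i (t+z)^i`): the coefficient of `t^p z^q` is `C(i, q) * (a i)^2`
when `p + q = 2i` and `q ≤ i`, and `0` otherwise. -/
def Pser (a : ℕ → ℤ) : MvPowerSeries (Fin 2) ℤ :=
  fun e =>
    if e 1 ≤ e 0 ∧ (e 0 + e 1) % 2 = 0 then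
      ((((e 0 + e 1) / 2).choose (e 1)) : ℤ) * (a ((e 0 + e 1) / 2)) ^ 2
    else 0

lemma coeff_apply' (f : MvPowerSeries (Fin 2) ℤ) (e : Fin 2 →₀ ℕ) :
    MvPowerSeries.coeff e f = f e := rfl

lemma single01_at0 : (Finsupp.single (0 : Fin 2) 1) 0 = 1 := by simp
lemma single01_at1 : (Finsupp.single (0 : Fin 2) 1) 1 = 0 := by
  simp [Finsupp.single_apply]

lemma coeff_mul_single01 (f g : MvPowerSeries (Fin 2) ℤ) :
    MvPowerSeries.coeff (Finsupp.single 0 1) (f * g) =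
      f 0 * g (Finsupp.single 0 1) + f (Finsupp.single 0 1) * g 0 := by
  rw [MvPowerSeries.coeff_mul, Finsupp.antidiagonal_single, Finset.sum_map]
  rw [show (Finset.HasAntidiagonal.antidiagonal (1:ℕ)) = {(0,1),(1,0)} from rfl]
  simp [coeff_apply', add_comm]

/-- There are no integer coefficients `a` with `a 0 = 1` and `a 1 = ±1` such that
`r(t+z) * r(t) = P(t,z) * r(z)` holds in `ℤ[[t,z]] / (2z, z³)`. -/
theorem stmt0 :
    ¬ ∃ a : ℕ → ℤ, a 0 = 1 ∧ (a 1 = 1 ∨ a 1 = -1) ∧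
      Ideal.Quotient.mk
          (Ideal.span {2 * (X 1 : MvPowerSeries (Fin 2) ℤ), (X 1) ^ 3})
          (rtz a * rt a) =
        Ideal.Quotient.mk
          (Ideal.span {2 * (X 1 : MvPowerSeries (Fin 2) ℤ), (X 1) ^ 3})
          (Pser a * rz a) := by
  rintro ⟨a, h0, h1, heq⟩
  rw [Ideal.Quotient.eq] at heq
  obtain ⟨x, y, hxy⟩ := Ideal.mem_span_pair.mp heq
  have hdvd : (X 1 : MvPowerSeries (Fin 2) ℤ) ∣ rtz a * rt a - Pser a * rz a := by
    rw [← hxy]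
    exact dvd_add (Dvd.dvd.mul_left (Dvd.dvd.mul_left dvd_rfl 2) x)
      (Dvd.dvd.mul_left (dvd_pow dvd_rfl (by norm_num)) y)
  have hcoeff := MvPowerSeries.X_dvd_iff.mp hdvd (Finsupp.single 0 1) single01_at1
  rw [map_sub, coeff_mul_single01, coeff_mul_single01, sub_eq_zero] at hcoeff
  have e1 : rtz a 0 = a 0 := by simp [rtz]
  have e2 : rtz a (Finsupp.single 0 1) = a 1 := by
    simp [rtz, single01_at0, single01_at1]
  have e3 : rt a 0 = a 0 := by simp [rt]
  have e4 : rt a (Finsupp.single 0 1) = a 1 := by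
    simp [rt, single01_at0, single01_at1]
  have e5 : Pser a 0 = a 0 ^ 2 := by simp [Pser]
  have e6 : Pser a (Finsupp.single 0 1) = 0 := by
    simp [Pser, single01_at0, single01_at1]
  have e7 : rz a 0 = a 0 := by simp [rz]
  have e8 : rz a (Finsupp.single 0 1) = 0 := by
    simp [rz, single01_at0, single01_at1]
  rw [e1, e2, e3, e4, e5, e6, e7, e8, h0] at hcoeff
  rcases h1 with h | h <;> rw [h] at hcoeff <;> norm_num at hcoeff

end
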